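/- Let 𝐓 be a finite set, (Y*, T*, Z, X) random elements where Y* = (Y*(t))_{t∈𝐓} ∈ ℝ^𝐓 and T* is a random function from the range of Z to 𝐓. Let Q be a probability measure with (Y*, T*) ⊥ Z | X under Q, and let P be the induced law of the observables (Y, T, Z, X) where T = T*(Z) and Y = Y*(T). Suppose the conditional law of Z given X is the same under Q and P. For κ ∈ L¹(P), define Υ(κ)(Y*, T*, X) = Σ_{t∈𝐓} E_{P_{Z|X}}[κ(Y*(t), t, Z, X)·1{T*(Z) = t}], the expectation taken over Z ∼ P_{Z|X} with (Y*, T*, X) fixed. If Υ(κ) = ℓ holds Q-almost surely for a measurable function ℓ of (Y*, T*, X), then ℓ ∈ L¹(Q) and E_Q[ℓ(Y*, T*, X)] = E_P[κ(Y, T, Z, X)]. -/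

import Mathlib

open MeasureTheory ProbabilityTheory
open scoped BigOperators

/-- Basic identification formula (Lemma `lm:warmup`): if `ζ` is the conditional law of the
instrument `Z` given `X` and `Z ⊥ (Y*,T*) | X` (encoded by the kernel representation
hypothesis `hker`), and `Υ(κ) = ℓ` holds `Q`-a.s., where
`Υ(κ) = Σ_t ∫ κ(Y*(t), t, z, X) 1{T*(z) = t} dζ(X)`, then `ℓ(Y*,T*,X)` is `Q`-integrable
and `E_Q[ℓ(Y*,T*,X)] = E_P[κ(Y,T,Z,X)]` with `T = T*(Z)`, `Y = Y*(T)`. -/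
theorem stmt17 {Ω β 𝒳 𝒯 𝓣 : Type*}
    [MeasurableSpace Ω] [MeasurableSpace β] [MeasurableSpace 𝒳] [MeasurableSpace 𝒯]
    [Fintype 𝓣] [DecidableEq 𝓣] [MeasurableSpace 𝓣] [MeasurableSingletonClass 𝓣]
    (Q : Measure Ω) [IsProbabilityMeasure Q]
    (Ystar : Ω → 𝓣 → ℝ) (Tstar : Ω → 𝒯) (Z : Ω → β) (X : Ω → 𝒳)
    (hY : Measurable Ystar) (hTs : Measurable Tstar) (hZ : Measurable Z) (hX : Measurable X)
    (ev : 𝒯 → β → 𝓣) (hev : Measurable (fun p : 𝒯 × β => ev p.1 p.2))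
    (ζ : Kernel 𝒳 β) [IsMarkovKernel ζ]
    (hker : ∀ g : (𝓣 → ℝ) × 𝒯 × β × 𝒳 → ℝ, Measurable g → (∃ C, ∀ p, |g p| ≤ C) →
      ∫ ω, g (Ystar ω, Tstar ω, Z ω, X ω) ∂Q
        = ∫ ω, (∫ z, g (Ystar ω, Tstar ω, z, X ω) ∂(ζ (X ω))) ∂Q)
    (κ : ℝ × 𝓣 × β × 𝒳 → ℝ) (hκm : Measurable κ)
    (hκint : Integrable (fun ω =>
      κ (Ystar ω (ev (Tstar ω) (Z ω)), ev (Tstar ω) (Z ω), Z ω, X ω)) Q)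
    (ℓ : (𝓣 → ℝ) × 𝒯 × 𝒳 → ℝ) (hℓm : Measurable ℓ)
    (hid : ∀ᵐ ω ∂Q,
      (∑ t, ∫ z, κ (Ystar ω t, t, z, X ω) * (if ev (Tstar ω) z = t then (1:ℝ) else 0)
        ∂(ζ (X ω)))
        = ℓ (Ystar ω, Tstar ω, X ω)) :
    Integrable (fun ω => ℓ (Ystar ω, Tstar ω, X ω)) Q ∧
      ∫ ω, ℓ (Ystar ω, Tstar ω, X ω) ∂Q
        = ∫ ω, κ (Ystar ω (ev (Tstar ω) (Z ω)), ev (Tstar ω) (Z ω), Z ω, X ω) ∂Q := by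
  classical
  -- measurable evaluation map
  have heval : Measurable fun q : (𝓣 → ℝ) × 𝓣 => q.1 q.2 := by
    have h : (fun q : (𝓣 → ℝ) × 𝓣 => q.1 q.2)
        = fun q => ∑ t, if q.2 = t then q.1 t else 0 := by
      funext q
      rw [Finset.sum_ite_eq (Finset.univ : Finset 𝓣) q.2 q.1]
      simp
    rw [h]
    exact Finset.measurable_sum _ fun t _ =>
      Measurable.ite (measurable_snd (measurableSet_singleton t))
        ((measurable_pi_apply t).comp measurable_fst) measurable_const
  set V : Ω → (𝓣 → ℝ) × 𝒯 × 𝒳 := fun ω => (Ystar ω, Tstar ω, X ω) with hVdef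
  set W : Ω → (𝓣 → ℝ) × 𝒯 × β × 𝒳 := fun ω => (Ystar ω, Tstar ω, Z ω, X ω) with hWdef
  have hVm : Measurable V := hY.prodMk (hTs.prodMk hX)
  have hWm : Measurable W := hY.prodMk (hTs.prodMk (hZ.prodMk hX))
  set φ : ((𝓣 → ℝ) × 𝒯 × 𝒳) × β → (𝓣 → ℝ) × 𝒯 × β × 𝒳 :=
    fun q => (q.1.1, q.1.2.1, q.2, q.1.2.2) with hφdef
  have hφm : Measurable φ :=
    measurable_fst.fst.prodMk (measurable_fst.snd.fst.prodMk
      (measurable_snd.prodMk measurable_fst.snd.snd))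
  set η : Kernel ((𝓣 → ℝ) × 𝒯 × 𝒳) β := ζ.comap (fun p => p.2.2) measurable_snd.snd with hηdef
  haveI : IsMarkovKernel η := by
    rw [hηdef]; infer_instance
  set μ₀ : Measure ((𝓣 → ℝ) × 𝒯 × 𝒳) := Q.map V with hμ₀def
  haveI : IsProbabilityMeasure μ₀ := Measure.isProbabilityMeasure_map hVm.aemeasurable
  -- the observable function of interest
  set g : (𝓣 → ℝ) × 𝒯 × β × 𝒳 → ℝ :=
    fun p => κ (p.1 (ev p.2.1 p.2.2.1), ev p.2.1 p.2.2.1, p.2.2.1, p.2.2.2) with hgdef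
  have hevp : Measurable fun p : (𝓣 → ℝ) × 𝒯 × β × 𝒳 => ev p.2.1 p.2.2.1 :=
    hev.comp (measurable_snd.fst.prodMk measurable_snd.snd.fst)
  have hgm : Measurable g := by
    apply hκm.comp
    exact (heval.comp (measurable_fst.prodMk hevp)).prodMk
      (hevp.prodMk (measurable_snd.snd.fst.prodMk measurable_snd.snd.snd))
  have hgW : (fun ω => κ (Ystar ω (ev (Tstar ω) (Z ω)), ev (Tstar ω) (Z ω), Z ω, X ω))
      = fun ω => g (W ω) := rfl
  -- key measure identity: law of observables = compProd law
  have hkey : Q.map W = (μ₀ ⊗ₘ η).map φ := by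
    ext A hA
    have hbd : ∃ C, ∀ p, |A.indicator (fun _ => (1:ℝ)) p| ≤ C := by
      refine ⟨1, fun p => ?_⟩
      by_cases hp : p ∈ A <;> simp [Set.indicator_apply, hp]
    have hind := hker (A.indicator fun _ => (1:ℝ)) (measurable_const.indicator hA) hbd
    have hL : ∫ ω, A.indicator (fun _ => (1:ℝ)) (W ω) ∂Q = (Q.map W A).toReal := by
      rw [Measure.map_apply hWm hA]
      have h : (fun ω => A.indicator (fun _ => (1:ℝ)) (W ω))
          = (W ⁻¹' A).indicator fun _ => (1:ℝ) := by
        funext ω; by_cases h : W ω ∈ A <;> simp [Set.indicator_apply, h]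
      rw [h, integral_indicator_const (1:ℝ) (hWm hA)]
      simp [measureReal_def]
    have hφA : MeasurableSet (φ ⁻¹' A) := hφm hA
    have hkerA : Measurable fun p : (𝓣 → ℝ) × 𝒯 × 𝒳 => η p (Prod.mk p ⁻¹' (φ ⁻¹' A)) :=
      Kernel.measurable_kernel_prodMk_left hφA
    have hR : ∫ ω, (∫ z, A.indicator (fun _ => (1:ℝ)) (Ystar ω, Tstar ω, z, X ω) ∂(ζ (X ω))) ∂Q
        = (((μ₀ ⊗ₘ η).map φ) A).toReal := by
      have hm2 : AEMeasurable (fun ω => (η (V ω)) (Prod.mk (V ω) ⁻¹' (φ ⁻¹' A))) Q :=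
        (hkerA.comp hVm).aemeasurable
      have htr : ∫ ω, ((η (V ω)) (Prod.mk (V ω) ⁻¹' (φ ⁻¹' A))).toReal ∂Q
          = (∫⁻ ω, (η (V ω)) (Prod.mk (V ω) ⁻¹' (φ ⁻¹' A)) ∂Q).toReal :=
        integral_toReal hm2 (Filter.Eventually.of_forall fun ω => measure_lt_top _ _)
      rw [Measure.map_apply hφm hA, Measure.compProd_apply hφA, hμ₀def,
        lintegral_map hkerA hVm, ← htr]
      refine integral_congr_ae (Filter.Eventually.of_forall fun ω => ?_)
      beta_reduce
      have hζη : η (V ω) = ζ (X ω) := by rw [hηdef, Kernel.comap_apply]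
      have hS : MeasurableSet {z : β | (Ystar ω, Tstar ω, z, X ω) ∈ A} := by
        have : (fun z : β => (Ystar ω, Tstar ω, z, X ω)) ⁻¹' A
            = {z : β | (Ystar ω, Tstar ω, z, X ω) ∈ A} := rfl
        rw [← this]
        exact (measurable_const.prodMk (measurable_const.prodMk
          (measurable_id.prodMk measurable_const))) hA
      have h : (fun z => A.indicator (fun _ => (1:ℝ)) (Ystar ω, Tstar ω, z, X ω))
          = ({z : β | (Ystar ω, Tstar ω, z, X ω) ∈ A}).indicator fun _ => (1:ℝ) := by
        funext z; by_cases h : (Ystar ω, Tstar ω, z, X ω) ∈ A <;> simp [Set.indicator_apply, h]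
      rw [h, integral_indicator_const (1:ℝ) hS, hζη]
      have : Prod.mk (V ω) ⁻¹' (φ ⁻¹' A) = {z : β | (Ystar ω, Tstar ω, z, X ω) ∈ A} := rfl
      rw [this]
      simp [measureReal_def]
    have := hL.symm.trans (hind.trans hR)
    exact (ENNReal.toReal_eq_toReal_iff' (measure_ne_top _ A) (measure_ne_top _ A)).mp this
  haveI : IsProbabilityMeasure ((μ₀ ⊗ₘ η).map φ) := by
    rw [← hkey]; exact Measure.isProbabilityMeasure_map hWm.aemeasurable
  -- integrability of g under the compProd measure
  have hgmap : Integrable g (Q.map W) :=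
    (integrable_map_measure hgm.aestronglyMeasurable hWm.aemeasurable).mpr hκint
  have hgφ : Integrable (fun q => g (φ q)) (μ₀ ⊗ₘ η) := by
    have := hkey ▸ hgmap
    exact (integrable_map_measure hgm.aestronglyMeasurable hφm.aemeasurable).mp this
  have hiff := Measure.integrable_compProd_iff (μ := μ₀) (κ := η)
    (f := fun q => g (φ q)) (hgm.comp hφm).aestronglyMeasurable
  obtain ⟨hslice, hnorm⟩ := hiff.mp hgφ
  -- integrability of the conditional expectation function
  have hsm : StronglyMeasurable fun p : (𝓣 → ℝ) × 𝒯 × 𝒳 => ∫ z, g (φ (p, z)) ∂(η p) :=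
    (hgm.comp hφm).stronglyMeasurable.integral_kernel_prod_right'
  have hIE : Integrable (fun p : (𝓣 → ℝ) × 𝒯 × 𝒳 => ∫ z, g (φ (p, z)) ∂(η p)) μ₀ := by
    refine hnorm.mono' hsm.aestronglyMeasurable ?_
    exact Filter.Eventually.of_forall fun p => norm_integral_le_integral_norm _
  -- transfer to Q
  have hIEQ : Integrable (fun ω => ∫ z, g (φ (V ω, z)) ∂(η (V ω))) Q := by
    rw [hμ₀def] at hIE
    exact (integrable_map_measure hsm.aestronglyMeasurable hVm.aemeasurable).mp hIE
  have hsliceQ : ∀ᵐ ω ∂Q, Integrable (fun z => g (φ (V ω, z))) (η (V ω)) := by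
    rw [hμ₀def] at hslice
    exact ae_of_ae_map hVm.aemeasurable hslice
  have hζη : ∀ ω, η (V ω) = ζ (X ω) := fun ω => by rw [hηdef, Kernel.comap_apply]
  -- a.e. identity : conditional expectation equals the sum, hence equals ℓ∘V
  have hmain : ∀ᵐ ω ∂Q, ∫ z, g (φ (V ω, z)) ∂(η (V ω)) = ℓ (Ystar ω, Tstar ω, X ω) := by
    filter_upwards [hsliceQ, hid] with ω hint hℓω
    have hgz : ∀ z, g (φ (V ω, z))
        = κ (Ystar ω (ev (Tstar ω) z), ev (Tstar ω) z, z, X ω) := fun z => rfl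
    have hterm : ∀ t : 𝓣, (fun z => κ (Ystar ω t, t, z, X ω)
          * (if ev (Tstar ω) z = t then (1:ℝ) else 0))
        = fun z => (if ev (Tstar ω) z = t then (1:ℝ) else 0) * g (φ (V ω, z)) := by
      intro t; funext z
      by_cases h : ev (Tstar ω) z = t
      · simp [hgz, h]
      · simp [h]
    have hcond : ∀ t : 𝓣, Measurable fun z : β => (if ev (Tstar ω) z = t then (1:ℝ) else 0) := by
      intro t
      have hs : MeasurableSet {z : β | ev (Tstar ω) z = t} := by
        have : Measurable fun z : β => ev (Tstar ω) z :=
          hev.comp (measurable_const.prodMk measurable_id)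
        exact this (measurableSet_singleton t)
      exact Measurable.ite hs measurable_const measurable_const
    have hintt : ∀ t : 𝓣, Integrable (fun z => κ (Ystar ω t, t, z, X ω)
        * (if ev (Tstar ω) z = t then (1:ℝ) else 0)) (ζ (X ω)) := by
      intro t
      rw [hterm t, ← hζη ω]
      exact hint.bdd_mul (hcond t).aestronglyMeasurable
        (c := 1) (Filter.Eventually.of_forall fun z => by by_cases h : ev (Tstar ω) z = t <;> simp [h])
    have hsum : ∀ z : β, g (φ (V ω, z))
        = ∑ t, κ (Ystar ω t, t, z, X ω) * (if ev (Tstar ω) z = t then (1:ℝ) else 0) := by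
      intro z
      rw [Finset.sum_eq_single (ev (Tstar ω) z)]
      · simp [hgz]
      · intro t _ ht; simp [Ne.symm ht]
      · intro h; exact absurd (Finset.mem_univ _) h
    calc ∫ z, g (φ (V ω, z)) ∂(η (V ω))
        = ∫ z, ∑ t, κ (Ystar ω t, t, z, X ω)
            * (if ev (Tstar ω) z = t then (1:ℝ) else 0) ∂(ζ (X ω)) := by
          rw [hζη ω]; exact integral_congr_ae (Filter.Eventually.of_forall fun z => hsum z)
      _ = ∑ t, ∫ z, κ (Ystar ω t, t, z, X ω)
            * (if ev (Tstar ω) z = t then (1:ℝ) else 0) ∂(ζ (X ω)) :=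
          integral_finset_sum _ fun t _ => hintt t
      _ = ℓ (Ystar ω, Tstar ω, X ω) := hℓω
  constructor
  · exact hIEQ.congr hmain
  · have h1 : ∫ ω, ℓ (Ystar ω, Tstar ω, X ω) ∂Q
        = ∫ ω, ∫ z, g (φ (V ω, z)) ∂(η (V ω)) ∂Q := (integral_congr_ae hmain).symm
    have h2 : ∫ ω, ∫ z, g (φ (V ω, z)) ∂(η (V ω)) ∂Q
        = ∫ p, ∫ z, g (φ (p, z)) ∂(η p) ∂μ₀ := by
      rw [hμ₀def, integral_map hVm.aemeasurable hsm.aestronglyMeasurable]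
    have h3 : ∫ p, ∫ z, g (φ (p, z)) ∂(η p) ∂μ₀ = ∫ q, g (φ q) ∂(μ₀ ⊗ₘ η) :=
      (Measure.integral_compProd hgφ).symm
    have h4 : ∫ q, g (φ q) ∂(μ₀ ⊗ₘ η) = ∫ p, g p ∂((μ₀ ⊗ₘ η).map φ) :=
      (integral_map hφm.aemeasurable hgm.aestronglyMeasurable).symm
    have h5 : ∫ p, g p ∂((μ₀ ⊗ₘ η).map φ) = ∫ ω, g (W ω) ∂Q := by
      rw [← hkey, integral_map hWm.aemeasurable hgm.aestronglyMeasurable]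
    rw [h1, h2, h3, h4, h5, ← hgW]
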